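/- arXiv:2203.13523 — 2 statements merged into one kernel-verified Lean document; each statement's English description precedes it below -/
import Mathlib

section
/- Let K be an algebraically closed field of characteristic p ≥ 3 and b1, …, b5 ∈ K such that h(X) = X^5 + b1*X^4 + b2*X^3 + b3*X^2 + b4*X + b5 is squarefree. Let f1, …, f6 be the Grant polynomials and U = {z ∈ K^8 : f1(z) = … = f6(z) = 0}. For a point P ∈ U write its coordinates as (z11(P), z12(P), z22(P), z111(P), z112(P), z122(P), z222(P), z(P)), and for R ∈ U define the function 𝔮_R on U by 𝔮_R(Q) = z11(Q) − z11(R) + z12(Q)·z22(R) − z12(R)·z22(Q). Then for every fixed R ∈ U, the zero set {Q ∈ U : 𝔮_R(Q) = 0} is an affine algebraic set of dimension one, i.e. the Krull dimension of its coordinate ring (the quotient of K[Z11, Z12, Z22, Z111, Z112, Z122, Z222, Z] by the vanishing ideal of this set) equals 1. -/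
set_option linter.unusedVariables false

open MvPolynomial in
/-- Grant polynomial `f1 = 2Z − Z11·Z22 + Z12² − b2·Z12 + b4`.
Variables: `0 = Z11, 1 = Z12, 2 = Z22, 3 = Z111, 4 = Z112, 5 = Z122, 6 = Z222, 7 = Z`. -/
noncomputable def grantF1 {R : Type*} [CommRing R] (b1 b2 b3 b4 b5 : R) :
    MvPolynomial (Fin 8) R :=
  2 * X 7 - X 0 * X 2 + X 1 ^ 2 - C b2 * X 1 + C b4

open MvPolynomial in
/-- Grant polynomial `f2 = Z112 − Z222·Z12 + Z122·Z22`. -/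
noncomputable def grantF2 {R : Type*} [CommRing R] (b1 b2 b3 b4 b5 : R) :
    MvPolynomial (Fin 8) R :=
  X 4 - X 6 * X 1 + X 5 * X 2

open MvPolynomial in
/-- Grant polynomial `f3 = Z111 + Z222·Z11 + Z122·Z12 − 2Z112·Z22 − 2b1·Z112 + b2·Z122`. -/
noncomputable def grantF3 {R : Type*} [CommRing R] (b1 b2 b3 b4 b5 : R) :
    MvPolynomial (Fin 8) R :=
  X 3 + X 6 * X 0 + X 5 * X 1 - 2 * X 4 * X 2 - 2 * C b1 * X 4 + C b2 * X 5

open MvPolynomial in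
/-- Grant polynomial `f4 = Z122² − Z11·Z22² + 2Z·Z22 + Z11·Z12 − b1·Z11·Z22 − b2·Z12·Z22
+ 2b1·Z − b1·b2·Z12 + b4·Z22 + b1·b4 − b5`. -/
noncomputable def grantF4 {R : Type*} [CommRing R] (b1 b2 b3 b4 b5 : R) :
    MvPolynomial (Fin 8) R :=
  X 5 ^ 2 - X 0 * X 2 ^ 2 + 2 * X 7 * X 2 + X 0 * X 1 - C b1 * X 0 * X 2
    - C b2 * X 1 * X 2 + 2 * C b1 * X 7 - C b1 * C b2 * X 1 + C b4 * X 2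
    + C (b1 * b4) - C b5

open MvPolynomial in
/-- Grant polynomial `f5 = Z222² − Z22³ − Z12·Z22 − b1·Z22² − Z11 − b2·Z22 − b3`. -/
noncomputable def grantF5 {R : Type*} [CommRing R] (b1 b2 b3 b4 b5 : R) :
    MvPolynomial (Fin 8) R :=
  X 6 ^ 2 - X 2 ^ 3 - X 1 * X 2 - C b1 * X 2 ^ 2 - X 0 - C b2 * X 2 - C b3

open MvPolynomial in
/-- Grant polynomial `f6 = Z122·Z222 − Z12·Z22² + Z − b2·Z12 − b1·Z12·Z22`. -/
noncomputable def grantF6 {R : Type*} [CommRing R] (b1 b2 b3 b4 b5 : R) :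
    MvPolynomial (Fin 8) R :=
  X 5 * X 6 - X 1 * X 2 ^ 2 + X 7 - C b2 * X 1 - C b1 * X 1 * X 2

/-- The list of the six Grant polynomials cutting out the affine part `U` of the
Jacobian of the genus 2 curve `Y² = X⁵ + b1·X⁴ + b2·X³ + b3·X² + b4·X + b5`. -/
noncomputable def grantPolys {R : Type*} [CommRing R] (b1 b2 b3 b4 b5 : R) :
    List (MvPolynomial (Fin 8) R) :=
  [grantF1 b1 b2 b3 b4 b5, grantF2 b1 b2 b3 b4 b5, grantF3 b1 b2 b3 b4 b5,
   grantF4 b1 b2 b3 b4 b5, grantF5 b1 b2 b3 b4 b5, grantF6 b1 b2 b3 b4 b5]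

/-- The bilinear expression `𝔮(Q,R) = z11(Q) − z11(R) + z12(Q)·z22(R) − z12(R)·z22(Q)`
on points of `K⁸` (coordinates `0 = Z11, 1 = Z12, 2 = Z22, …, 7 = Z`). -/
def grantQ {K : Type*} [Field K] (Q R : Fin 8 → K) : K :=
  Q 0 - R 0 + Q 1 * R 2 - R 1 * Q 2

namespace GrantAux

variable {K : Type*} [Field K]

open MvPolynomial

lemma eval_grantF1 (b1 b2 b3 b4 b5 : K) (x : Fin 8 → K) :
    eval x (grantF1 b1 b2 b3 b4 b5) = 2*x 7 - x 0 * x 2 + (x 1)^2 - b2 * x 1 + b4 := by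
  simp only [grantF1, map_sub, map_add, map_mul, map_pow, map_ofNat, eval_X, eval_C]

lemma eval_grantF2 (b1 b2 b3 b4 b5 : K) (x : Fin 8 → K) :
    eval x (grantF2 b1 b2 b3 b4 b5) = x 4 - x 6 * x 1 + x 5 * x 2 := by
  simp only [grantF2, map_sub, map_add, map_mul, map_pow, map_ofNat, eval_X, eval_C]

lemma eval_grantF3 (b1 b2 b3 b4 b5 : K) (x : Fin 8 → K) :
    eval x (grantF3 b1 b2 b3 b4 b5)
      = x 3 + x 6 * x 0 + x 5 * x 1 - 2*(x 4) * x 2 - 2*b1*(x 4) + b2 * x 5 := by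
  simp only [grantF3, map_sub, map_add, map_mul, map_pow, map_ofNat, eval_X, eval_C]

lemma eval_grantF4 (b1 b2 b3 b4 b5 : K) (x : Fin 8 → K) :
    eval x (grantF4 b1 b2 b3 b4 b5)
      = (x 5)^2 - x 0 * (x 2)^2 + 2*(x 7)*(x 2) + x 0 * x 1 - b1*(x 0)*(x 2) - b2*(x 1)*(x 2)
        + 2*b1*(x 7) - b1*b2*(x 1) + b4*(x 2) + b1*b4 - b5 := by
  simp only [grantF4, map_sub, map_add, map_mul, map_pow, map_ofNat, eval_X, eval_C]

lemma eval_grantF5 (b1 b2 b3 b4 b5 : K) (x : Fin 8 → K) :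
    eval x (grantF5 b1 b2 b3 b4 b5)
      = (x 6)^2 - (x 2)^3 - x 1 * x 2 - b1*(x 2)^2 - x 0 - b2*(x 2) - b3 := by
  simp only [grantF5, map_sub, map_add, map_mul, map_pow, map_ofNat, eval_X, eval_C]

lemma eval_grantF6 (b1 b2 b3 b4 b5 : K) (x : Fin 8 → K) :
    eval x (grantF6 b1 b2 b3 b4 b5)
      = x 5 * x 6 - x 1 * (x 2)^2 + x 7 - b2*(x 1) - b1*(x 1)*(x 2) := by
  simp only [grantF6, map_sub, map_add, map_mul, map_pow, map_ofNat, eval_X, eval_C]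

/-- auxiliary polynomial `W` : on the Grant variety, `Z222² = W(Z22, Z12)`. -/
def grW (b1 b2 b3 b4 b5 r0 r1 r2 s u : K) : K :=
  s^3 + b1*s^2 + (b2+r1)*s + (b3 + r0) + u*(s - r2)

/-- auxiliary polynomial `G` : on the Grant variety, `2·Z122·Z222 = G(Z22, Z12)`. -/
def grG (b1 b2 b3 b4 b5 r0 r1 r2 s u : K) : K :=
  u^2 + u*(2*s^2 + (2*b1+r2)*s + b2) + (-(r1*s^2) - r0*s + b4)

/-- auxiliary polynomial `H` : on the Grant variety, `Z122² = H(Z22, Z12)`. -/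
def grH (b1 b2 b3 b4 b5 r0 r1 r2 s u : K) : K :=
  (s+b1+r2)*u^2 - (r0+r1*s)*u + b5

/-- the monic quartic relation satisfied by `u = Z12` over `K[s] = K[Z22]`. -/
def grQu (b1 b2 b3 b4 b5 r0 r1 r2 s u : K) : K :=
  (grG b1 b2 b3 b4 b5 r0 r1 r2 s u)^2
    - 4 * grH b1 b2 b3 b4 b5 r0 r1 r2 s u * grW b1 b2 b3 b4 b5 r0 r1 r2 s u

def grA3 (b1 b2 b3 b4 b5 r0 r1 r2 s : K) : K :=
  2*r2*s + (4*r2^2 + 2*b2 + 4*b1*r2)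

def grA2 (b1 b2 b3 b4 b5 r0 r1 r2 s : K) : K :=
  (r2^2 - 2*r1)*s^2 + (-(8*r1*r2) - 2*r0 - 4*b3 - 2*b2*r2 - 4*b1*r1)*s
    + (-(8*r0*r2) + 2*b4 - 4*b3*r2 + b2^2 - 4*b1*r0 - 4*b1*b3)

def grA1 (b1 b2 b3 b4 b5 r0 r1 r2 s : K) : K :=
  -(2*r1*r2)*s^3 + (4*r1^2 - 2*r0*r2 + 4*b4 + 2*b2*r1)*s^2
    + (8*r0*r1 - 4*b5 + 2*b4*r2 + 4*b3*r1 + 2*b2*r0 + 4*b1*b4)*s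
    + (4*r0^2 + 4*b5*r2 + 4*b3*r0 + 2*b2*b4)

def grA0 (b1 b2 b3 b4 b5 r0 r1 r2 s : K) : K :=
  r1^2*s^4 + (2*r0*r1 - 4*b5)*s^3 + (r0^2 - 2*b4*r1 - 4*b1*b5)*s^2
    + (-(4*b5*r1) - 2*b4*r0 - 4*b2*b5)*s + (b4^2 - 4*b3*b5 - 4*b5*r0)

lemma grQu_expand (b1 b2 b3 b4 b5 r0 r1 r2 s u : K) :
    grQu b1 b2 b3 b4 b5 r0 r1 r2 s u
      = u^4 + grA3 b1 b2 b3 b4 b5 r0 r1 r2 s * u^3 + grA2 b1 b2 b3 b4 b5 r0 r1 r2 s * u^2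
        + grA1 b1 b2 b3 b4 b5 r0 r1 r2 s * u + grA0 b1 b2 b3 b4 b5 r0 r1 r2 s := by
  unfold grQu grG grH grW grA3 grA2 grA1 grA0
  ring

lemma grant_point (b1 b2 b3 b4 b5 r0 r1 r2 s u v w z0 z7 : K)
    (h1 : 2*z7 - z0*s + u^2 - b2*u + b4 = 0)
    (h4 : v^2 - z0*s^2 + 2*z7*s + z0*u - b1*z0*s - b2*u*s + 2*b1*z7 - b1*b2*u + b4*s + b1*b4 - b5 = 0)
    (h5 : w^2 - s^3 - u*s - b1*s^2 - z0 - b2*s - b3 = 0)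
    (h6 : v*w - u*s^2 + z7 - b2*u - b1*u*s = 0)
    (hq : z0 - r0 + u*r2 - r1*s = 0) :
    grQu b1 b2 b3 b4 b5 r0 r1 r2 s u = 0 := by
  have eW : w^2 = grW b1 b2 b3 b4 b5 r0 r1 r2 s u := by
    unfold grW; linear_combination h5 + hq
  have eG : 2*(v*w) = grG b1 b2 b3 b4 b5 r0 r1 r2 s u := by
    unfold grG; linear_combination 2*h6 - h1 - s*hq
  have eH : v^2 = grH b1 b2 b3 b4 b5 r0 r1 r2 s u := by
    unfold grH; linear_combination h4 - (s+b1)*h1 - u*hq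
  unfold grQu
  linear_combination (-(grG b1 b2 b3 b4 b5 r0 r1 r2 s u + 2*(v*w)))*eG + 4*w^2*eH
    + 4*(grH b1 b2 b3 b4 b5 r0 r1 r2 s u)*eW

lemma grQu_has_root [IsAlgClosed K] (b1 b2 b3 b4 b5 r0 r1 r2 t : K) :
    ∃ u : K, grQu b1 b2 b3 b4 b5 r0 r1 r2 t u = 0 := by
  set q : Polynomial K := Polynomial.X^4
      + Polynomial.C (grA3 b1 b2 b3 b4 b5 r0 r1 r2 t) * Polynomial.X^3
      + Polynomial.C (grA2 b1 b2 b3 b4 b5 r0 r1 r2 t) * Polynomial.X^2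
      + Polynomial.C (grA1 b1 b2 b3 b4 b5 r0 r1 r2 t) * Polynomial.X
      + Polynomial.C (grA0 b1 b2 b3 b4 b5 r0 r1 r2 t) with hq
  have hdeg : q.degree = 4 := by rw [hq]; compute_degree!
  obtain ⟨u, hu⟩ := IsAlgClosed.exists_root q (by rw [hdeg]; exact (by decide : (4 : WithBot ℕ) ≠ 0))
  refine ⟨u, ?_⟩
  have hu' : q.eval u = 0 := hu
  rw [hq] at hu'
  simp only [Polynomial.eval_add, Polynomial.eval_mul, Polynomial.eval_pow, Polynomial.eval_X,
    Polynomial.eval_C] at hu'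
  rw [grQu_expand]
  linear_combination hu'

lemma grant_build (hK2 : (2:K) ≠ 0) (b1 b2 b3 b4 b5 r0 r1 r2 t u v w : K)
    (hw : w^2 = grW b1 b2 b3 b4 b5 r0 r1 r2 t u)
    (hvw : 2*(v*w) = grG b1 b2 b3 b4 b5 r0 r1 r2 t u)
    (hv2 : v^2 = grH b1 b2 b3 b4 b5 r0 r1 r2 t u) :
    ∃ x : Fin 8 → K,
      (2*x 7 - x 0 * x 2 + (x 1)^2 - b2 * x 1 + b4 = 0) ∧
      (x 4 - x 6 * x 1 + x 5 * x 2 = 0) ∧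
      (x 3 + x 6 * x 0 + x 5 * x 1 - 2*(x 4) * x 2 - 2*b1*(x 4) + b2 * x 5 = 0) ∧
      ((x 5)^2 - x 0 * (x 2)^2 + 2*(x 7)*(x 2) + x 0 * x 1 - b1*(x 0)*(x 2) - b2*(x 1)*(x 2)
        + 2*b1*(x 7) - b1*b2*(x 1) + b4*(x 2) + b1*b4 - b5 = 0) ∧
      ((x 6)^2 - (x 2)^3 - x 1 * x 2 - b1*(x 2)^2 - x 0 - b2*(x 2) - b3 = 0) ∧
      (x 5 * x 6 - x 1 * (x 2)^2 + x 7 - b2*(x 1) - b1*(x 1)*(x 2) = 0) ∧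
      (x 0 - r0 + x 1 * r2 - r1 * x 2 = 0) ∧ x 2 = t := by
  unfold grW at hw
  unfold grG at hvw
  unfold grH at hv2
  set z0 : K := r0 + r1*t - r2*u with hz0
  set z7 : K := (z0*t - u^2 + b2*u - b4)/2 with hz7
  set x4 : K := w*u - v*t with hx4
  set x3 : K := -(w*z0) - v*u + 2*x4*t + 2*b1*x4 - b2*v with hx3
  refine ⟨![z0, u, t, x3, x4, v, w, z7], ?_, ?_, ?_, ?_, ?_, ?_, ?_, rfl⟩
  · show 2*z7 - z0 * t + u^2 - b2 * u + b4 = 0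
    rw [hz7]; field_simp
    ring
  · show x4 - w * u + v * t = 0
    rw [hx4]; ring
  · show x3 + w * z0 + v * u - 2*x4 * t - 2*b1*x4 + b2 * v = 0
    rw [hx3]; ring
  · show v^2 - z0 * t^2 + 2*z7*t + z0 * u - b1*z0*t - b2*u*t + 2*b1*z7 - b1*b2*u + b4*t + b1*b4 - b5 = 0
    rw [hz7, hz0]; field_simp; linear_combination hv2
  · show w^2 - t^3 - u * t - b1*t^2 - z0 - b2*t - b3 = 0
    rw [hz0]; linear_combination hw
  · show v * w - u * t^2 + z7 - b2*u - b1*u*t = 0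
    rw [hz7, hz0]; field_simp; linear_combination hvw
  · show z0 - r0 + u * r2 - r1 * t = 0
    rw [hz0]; ring

lemma grant_exists [IsAlgClosed K] (hK2 : (2:K) ≠ 0) (b1 b2 b3 b4 b5 r0 r1 r2 t : K) :
    ∃ x : Fin 8 → K,
      (2*x 7 - x 0 * x 2 + (x 1)^2 - b2 * x 1 + b4 = 0) ∧
      (x 4 - x 6 * x 1 + x 5 * x 2 = 0) ∧
      (x 3 + x 6 * x 0 + x 5 * x 1 - 2*(x 4) * x 2 - 2*b1*(x 4) + b2 * x 5 = 0) ∧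
      ((x 5)^2 - x 0 * (x 2)^2 + 2*(x 7)*(x 2) + x 0 * x 1 - b1*(x 0)*(x 2) - b2*(x 1)*(x 2)
        + 2*b1*(x 7) - b1*b2*(x 1) + b4*(x 2) + b1*b4 - b5 = 0) ∧
      ((x 6)^2 - (x 2)^3 - x 1 * x 2 - b1*(x 2)^2 - x 0 - b2*(x 2) - b3 = 0) ∧
      (x 5 * x 6 - x 1 * (x 2)^2 + x 7 - b2*(x 1) - b1*(x 1)*(x 2) = 0) ∧
      (x 0 - r0 + x 1 * r2 - r1 * x 2 = 0) ∧ x 2 = t := by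
  obtain ⟨u, hu⟩ := grQu_has_root b1 b2 b3 b4 b5 r0 r1 r2 t
  unfold grQu at hu
  obtain ⟨w, hw⟩ := IsAlgClosed.exists_pow_nat_eq (grW b1 b2 b3 b4 b5 r0 r1 r2 t u) (n := 2)
    (by norm_num)
  by_cases hw0 : w = 0
  · have hW0 : grW b1 b2 b3 b4 b5 r0 r1 r2 t u = 0 := by rw [← hw, hw0]; ring
    have hG0 : grG b1 b2 b3 b4 b5 r0 r1 r2 t u = 0 := by
      have hsq : (grG b1 b2 b3 b4 b5 r0 r1 r2 t u)^2 = 0 := by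
        rw [hW0] at hu; linear_combination hu
      exact pow_eq_zero_iff (n := 2) (by norm_num) |>.mp hsq
    obtain ⟨v, hv⟩ := IsAlgClosed.exists_pow_nat_eq (grH b1 b2 b3 b4 b5 r0 r1 r2 t u) (n := 2)
      (by norm_num)
    exact grant_build hK2 b1 b2 b3 b4 b5 r0 r1 r2 t u v w hw
      (by rw [hw0, hG0]; ring) hv
  · refine grant_build hK2 b1 b2 b3 b4 b5 r0 r1 r2 t u
      (grG b1 b2 b3 b4 b5 r0 r1 r2 t u / (2*w)) w hw ?_ ?_
    · field_simp
    · have h2w : (2*w)^2 ≠ 0 := pow_ne_zero _ (mul_ne_zero hK2 hw0)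
      field_simp
      linear_combination hu - 4*(grH b1 b2 b3 b4 b5 r0 r1 r2 t u)*hw

end GrantAux

set_option maxHeartbeats 1600000
set_option synthInstance.maxHeartbeats 1000000

open MvPolynomial Polynomial in
/-- Over an algebraically closed field `K` of characteristic `p ≥ 3`
with `h(X) = X⁵ + b1·X⁴ + b2·X³ + b3·X² + b4·X + b5` squarefree, let `U ⊆ K⁸` be the
common zero set of the six Grant polynomials. Then for every `R ∈ U`, the zero set
`{Q ∈ U : 𝔮_R(Q) = 0}` has dimension one: the Krull dimension of its coordinate ring
(the polynomial ring modulo its vanishing ideal) equals `1`. -/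
theorem stmt_6 {K : Type*} [Field K] [IsAlgClosed K] (p : ℕ) [CharP K p] (hp : 3 ≤ p)
    (b1 b2 b3 b4 b5 : K)
    (hsf : Squarefree (Polynomial.X ^ 5 + Polynomial.C b1 * Polynomial.X ^ 4 +
      Polynomial.C b2 * Polynomial.X ^ 3 + Polynomial.C b3 * Polynomial.X ^ 2 +
      Polynomial.C b4 * Polynomial.X + Polynomial.C b5 : Polynomial K))
    (U : Set (Fin 8 → K))
    (hU : U = {z : Fin 8 → K | ∀ fi ∈ grantPolys b1 b2 b3 b4 b5, eval z fi = 0}) :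
    ∀ R ∈ U,
      ringKrullDim (MvPolynomial (Fin 8) K ⧸
        vanishingIdeal K {Q ∈ U | grantQ Q R = 0}) = ((1 : ℕ∞) : WithBot ℕ∞) := by
  intro R hR
  subst hU
  -- the characteristic is odd, so `2 ≠ 0`
  have hK2 : (2:K) ≠ 0 := by
    have hpr : p.Prime := (CharP.char_is_prime_or_zero K p).resolve_right (by omega)
    intro h2
    have hdvd : p ∣ 2 := (CharP.cast_eq_zero_iff K p 2).mp (by exact_mod_cast h2)
    have := Nat.le_of_dvd (by norm_num) hdvd
    omega
  set Vs : Set (Fin 8 → K) :=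
    {Q | Q ∈ {z : Fin 8 → K | ∀ fi ∈ grantPolys b1 b2 b3 b4 b5, MvPolynomial.eval z fi = 0}
      ∧ grantQ Q R = 0} with hVs
  set I : Ideal (MvPolynomial (Fin 8) K) := MvPolynomial.vanishingIdeal K Vs with hI
  -- the seven equations satisfied by every point of `Vs`
  have hx7 : ∀ x ∈ Vs,
      (2*x 7 - x 0 * x 2 + (x 1)^2 - b2 * x 1 + b4 = 0) ∧
      (x 4 - x 6 * x 1 + x 5 * x 2 = 0) ∧
      (x 3 + x 6 * x 0 + x 5 * x 1 - 2*(x 4) * x 2 - 2*b1*(x 4) + b2 * x 5 = 0) ∧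
      ((x 5)^2 - x 0 * (x 2)^2 + 2*(x 7)*(x 2) + x 0 * x 1 - b1*(x 0)*(x 2) - b2*(x 1)*(x 2)
        + 2*b1*(x 7) - b1*b2*(x 1) + b4*(x 2) + b1*b4 - b5 = 0) ∧
      ((x 6)^2 - (x 2)^3 - x 1 * x 2 - b1*(x 2)^2 - x 0 - b2*(x 2) - b3 = 0) ∧
      (x 5 * x 6 - x 1 * (x 2)^2 + x 7 - b2*(x 1) - b1*(x 1)*(x 2) = 0) ∧
      (x 0 - R 0 + x 1 * R 2 - R 1 * x 2 = 0) := by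
    intro x hx
    obtain ⟨hxU, hxq⟩ := hx
    refine ⟨?_, ?_, ?_, ?_, ?_, ?_, hxq⟩
    · have h := hxU _ (show grantF1 b1 b2 b3 b4 b5 ∈ grantPolys b1 b2 b3 b4 b5 by
        simp [grantPolys])
      rwa [GrantAux.eval_grantF1] at h
    · have h := hxU _ (show grantF2 b1 b2 b3 b4 b5 ∈ grantPolys b1 b2 b3 b4 b5 by
        simp [grantPolys])
      rwa [GrantAux.eval_grantF2] at h
    · have h := hxU _ (show grantF3 b1 b2 b3 b4 b5 ∈ grantPolys b1 b2 b3 b4 b5 by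
        simp [grantPolys])
      rwa [GrantAux.eval_grantF3] at h
    · have h := hxU _ (show grantF4 b1 b2 b3 b4 b5 ∈ grantPolys b1 b2 b3 b4 b5 by
        simp [grantPolys])
      rwa [GrantAux.eval_grantF4] at h
    · have h := hxU _ (show grantF5 b1 b2 b3 b4 b5 ∈ grantPolys b1 b2 b3 b4 b5 by
        simp [grantPolys])
      rwa [GrantAux.eval_grantF5] at h
    · have h := hxU _ (show grantF6 b1 b2 b3 b4 b5 ∈ grantPolys b1 b2 b3 b4 b5 by
        simp [grantPolys])
      rwa [GrantAux.eval_grantF6] at h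
  have mkzero : ∀ P : MvPolynomial (Fin 8) K, (∀ x ∈ Vs, MvPolynomial.eval x P = 0) →
      Ideal.Quotient.mk I P = 0 := fun P hP => by
    rw [Ideal.Quotient.eq_zero_iff_mem, hI]
    exact hP
  have hmkC : ∀ c : K, Ideal.Quotient.mk I (C c) = algebraMap K (MvPolynomial (Fin 8) K ⧸ I) c :=
    fun c => by rw [← MvPolynomial.algebraMap_eq, Ideal.Quotient.mk_algebraMap]
  -- the `K[T]`-algebra structure, `T ↦ Z22`
  letI algP : Algebra (Polynomial K) (MvPolynomial (Fin 8) K ⧸ I) :=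
    ((Polynomial.aeval (Ideal.Quotient.mk I (MvPolynomial.X 2)) : Polynomial K →ₐ[K] _)).toRingHom.toAlgebra
  have halg : algebraMap (Polynomial K) (MvPolynomial (Fin 8) K ⧸ I)
      = ((Polynomial.aeval (Ideal.Quotient.mk I (MvPolynomial.X 2)) : Polynomial K →ₐ[K] _)).toRingHom :=
    RingHom.algebraMap_toAlgebra _
  -- relations in the quotient ring
  have relq : Ideal.Quotient.mk I (MvPolynomial.X 0)
      = algebraMap K _ (R 0) + algebraMap K _ (R 1) * Ideal.Quotient.mk I (MvPolynomial.X 2)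
        - algebraMap K _ (R 2) * Ideal.Quotient.mk I (MvPolynomial.X 1) := by
    have h := mkzero (MvPolynomial.X 0 - MvPolynomial.C (R 0) + MvPolynomial.X 1 * MvPolynomial.C (R 2) - MvPolynomial.C (R 1) * MvPolynomial.X 2) (fun x hx => by
      have h7 := (hx7 x hx).2.2.2.2.2.2
      simp only [map_sub, map_add, map_mul, MvPolynomial.eval_X, MvPolynomial.eval_C]
      linear_combination h7)
    simp only [map_sub, map_add, map_mul, hmkC] at h
    linear_combination h
  have rel1 : 2 * Ideal.Quotient.mk I (MvPolynomial.X 7)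
      = Ideal.Quotient.mk I (MvPolynomial.X 0) * Ideal.Quotient.mk I (MvPolynomial.X 2) - (Ideal.Quotient.mk I (MvPolynomial.X 1))^2
        + algebraMap K _ b2 * Ideal.Quotient.mk I (MvPolynomial.X 1) - algebraMap K _ b4 := by
    have h := mkzero (grantF1 b1 b2 b3 b4 b5) (fun x hx => by
      rw [GrantAux.eval_grantF1]; exact (hx7 x hx).1)
    simp only [grantF1, map_sub, map_add, map_mul, map_pow, map_ofNat, hmkC] at h
    linear_combination h
  have rel2 : Ideal.Quotient.mk I (MvPolynomial.X 4)
      = Ideal.Quotient.mk I (MvPolynomial.X 6) * Ideal.Quotient.mk I (MvPolynomial.X 1)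
        - Ideal.Quotient.mk I (MvPolynomial.X 5) * Ideal.Quotient.mk I (MvPolynomial.X 2) := by
    have h := mkzero (grantF2 b1 b2 b3 b4 b5) (fun x hx => by
      rw [GrantAux.eval_grantF2]; exact (hx7 x hx).2.1)
    simp only [grantF2, map_sub, map_add, map_mul, hmkC] at h
    linear_combination h
  have rel3 : Ideal.Quotient.mk I (MvPolynomial.X 3)
      = -(Ideal.Quotient.mk I (MvPolynomial.X 6) * Ideal.Quotient.mk I (MvPolynomial.X 0))
        - Ideal.Quotient.mk I (MvPolynomial.X 5) * Ideal.Quotient.mk I (MvPolynomial.X 1)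
        + 2 * Ideal.Quotient.mk I (MvPolynomial.X 4) * Ideal.Quotient.mk I (MvPolynomial.X 2)
        + 2 * algebraMap K _ b1 * Ideal.Quotient.mk I (MvPolynomial.X 4)
        - algebraMap K _ b2 * Ideal.Quotient.mk I (MvPolynomial.X 5) := by
    have h := mkzero (grantF3 b1 b2 b3 b4 b5) (fun x hx => by
      rw [GrantAux.eval_grantF3]; exact (hx7 x hx).2.2.1)
    simp only [grantF3, map_sub, map_add, map_mul, map_ofNat, hmkC] at h
    linear_combination h
  have relW : (Ideal.Quotient.mk I (MvPolynomial.X 6))^2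
      = (Ideal.Quotient.mk I (MvPolynomial.X 2))^3 + algebraMap K _ b1 * (Ideal.Quotient.mk I (MvPolynomial.X 2))^2
        + (algebraMap K _ b2 + algebraMap K _ (R 1)) * Ideal.Quotient.mk I (MvPolynomial.X 2)
        + (algebraMap K _ b3 + algebraMap K _ (R 0))
        + Ideal.Quotient.mk I (MvPolynomial.X 1) * (Ideal.Quotient.mk I (MvPolynomial.X 2) - algebraMap K _ (R 2)) := by
    have h := mkzero ((MvPolynomial.X 6)^2 - ((MvPolynomial.X 2)^3 + MvPolynomial.C b1 * (MvPolynomial.X 2)^2 + MvPolynomial.C (b2 + R 1) * MvPolynomial.X 2 + MvPolynomial.C (b3 + R 0)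
        + MvPolynomial.X 1 * (MvPolynomial.X 2 - MvPolynomial.C (R 2)))) (fun x hx => by
      obtain ⟨h1, h2, h3, h4, h5, h6, hq⟩ := hx7 x hx
      simp only [map_sub, map_add, map_mul, map_pow, MvPolynomial.eval_X, MvPolynomial.eval_C]
      linear_combination h5 + hq)
    simp only [map_sub, map_add, map_mul, map_pow, hmkC] at h
    linear_combination h
  have relH : (Ideal.Quotient.mk I (MvPolynomial.X 5))^2
      = (Ideal.Quotient.mk I (MvPolynomial.X 2) + (algebraMap K _ b1 + algebraMap K _ (R 2))) * (Ideal.Quotient.mk I (MvPolynomial.X 1))^2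
        - (algebraMap K _ (R 0) + algebraMap K _ (R 1) * Ideal.Quotient.mk I (MvPolynomial.X 2))
            * Ideal.Quotient.mk I (MvPolynomial.X 1)
        + algebraMap K _ b5 := by
    have h := mkzero ((MvPolynomial.X 5)^2 - ((MvPolynomial.X 2 + MvPolynomial.C (b1 + R 2)) * (MvPolynomial.X 1)^2
        - (MvPolynomial.C (R 0) + MvPolynomial.C (R 1) * MvPolynomial.X 2) * MvPolynomial.X 1 + MvPolynomial.C b5)) (fun x hx => by
      obtain ⟨h1, h2, h3, h4, h5, h6, hq⟩ := hx7 x hx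
      simp only [map_sub, map_add, map_mul, map_pow, MvPolynomial.eval_X, MvPolynomial.eval_C]
      linear_combination h4 - (x 2 + b1)*h1 - x 1*hq)
    simp only [map_sub, map_add, map_mul, map_pow, hmkC] at h
    linear_combination h
  -- the monic quartic relation for `Z12`
  set QuMv : MvPolynomial (Fin 8) K := (MvPolynomial.X 1)^4
      + (MvPolynomial.C (2*(R 2)) * MvPolynomial.X 2 + MvPolynomial.C (4*(R 2)^2 + 2*b2 + 4*b1*(R 2))) * (MvPolynomial.X 1)^3
      + (MvPolynomial.C ((R 2)^2 - 2*(R 1)) * (MvPolynomial.X 2)^2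
          + MvPolynomial.C (-(8*(R 1)*(R 2)) - 2*(R 0) - 4*b3 - 2*b2*(R 2) - 4*b1*(R 1)) * MvPolynomial.X 2
          + MvPolynomial.C (-(8*(R 0)*(R 2)) + 2*b4 - 4*b3*(R 2) + b2^2 - 4*b1*(R 0) - 4*b1*b3)) * (MvPolynomial.X 1)^2
      + (MvPolynomial.C (-(2*(R 1)*(R 2))) * (MvPolynomial.X 2)^3
          + MvPolynomial.C (4*(R 1)^2 - 2*(R 0)*(R 2) + 4*b4 + 2*b2*(R 1)) * (MvPolynomial.X 2)^2
          + MvPolynomial.C (8*(R 0)*(R 1) - 4*b5 + 2*b4*(R 2) + 4*b3*(R 1) + 2*b2*(R 0) + 4*b1*b4) * MvPolynomial.X 2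
          + MvPolynomial.C (4*(R 0)^2 + 4*b5*(R 2) + 4*b3*(R 0) + 2*b2*b4)) * (MvPolynomial.X 1)
      + (MvPolynomial.C ((R 1)^2) * (MvPolynomial.X 2)^4 + MvPolynomial.C (2*(R 0)*(R 1) - 4*b5) * (MvPolynomial.X 2)^3
          + MvPolynomial.C ((R 0)^2 - 2*b4*(R 1) - 4*b1*b5) * (MvPolynomial.X 2)^2
          + MvPolynomial.C (-(4*b5*(R 1)) - 2*b4*(R 0) - 4*b2*b5) * MvPolynomial.X 2
          + MvPolynomial.C (b4^2 - 4*b3*b5 - 4*b5*(R 0))) with hQuMv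
  have relQu : Ideal.Quotient.mk I QuMv = 0 := by
    apply mkzero
    intro x hx
    obtain ⟨h1, h2, h3, h4, h5, h6, hq⟩ := hx7 x hx
    have hQ := GrantAux.grant_point b1 b2 b3 b4 b5 (R 0) (R 1) (R 2) (x 2) (x 1) (x 5) (x 6)
      (x 0) (x 7) h1 h4 h5 h6 hq
    rw [GrantAux.grQu_expand] at hQ
    unfold GrantAux.grA3 GrantAux.grA2 GrantAux.grA1 GrantAux.grA0 at hQ
    rw [hQuMv]
    simp only [map_add, map_mul, map_pow, map_sub, map_neg, MvPolynomial.eval_X, MvPolynomial.eval_C]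
    linear_combination hQ
  -- integrality of the generators over `K[T]`
  have iC : ∀ c : K, IsIntegral (Polynomial K) (algebraMap K (MvPolynomial (Fin 8) K ⧸ I) c) := by
    intro c
    have hc : algebraMap K (MvPolynomial (Fin 8) K ⧸ I) c
        = algebraMap (Polynomial K) _ (Polynomial.C c) := by
      rw [halg]; simp
    rw [hc]; exact isIntegral_algebraMap
  have i2 : IsIntegral (Polynomial K) (2 : MvPolynomial (Fin 8) K ⧸ I) := by
    have h2A : (2 : MvPolynomial (Fin 8) K ⧸ I) = algebraMap K _ 2 := by rw [map_ofNat]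
    rw [h2A]; exact iC 2
  have iS : IsIntegral (Polynomial K) (Ideal.Quotient.mk I (MvPolynomial.X 2)) := by
    refine ⟨Polynomial.X - Polynomial.C Polynomial.X, Polynomial.monic_X_sub_C _, ?_⟩
    rw [← Polynomial.aeval_def]
    simp [halg]
  have iU : IsIntegral (Polynomial K) (Ideal.Quotient.mk I (MvPolynomial.X 1)) := by
    refine ⟨Polynomial.X^4
      + Polynomial.C (Polynomial.C (2*(R 2)) * Polynomial.X
          + Polynomial.C (4*(R 2)^2 + 2*b2 + 4*b1*(R 2))) * Polynomial.X^3
      + Polynomial.C (Polynomial.C ((R 2)^2 - 2*(R 1)) * Polynomial.X^2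
          + Polynomial.C (-(8*(R 1)*(R 2)) - 2*(R 0) - 4*b3 - 2*b2*(R 2) - 4*b1*(R 1)) * Polynomial.X
          + Polynomial.C (-(8*(R 0)*(R 2)) + 2*b4 - 4*b3*(R 2) + b2^2 - 4*b1*(R 0) - 4*b1*b3))
            * Polynomial.X^2
      + Polynomial.C (Polynomial.C (-(2*(R 1)*(R 2))) * Polynomial.X^3
          + Polynomial.C (4*(R 1)^2 - 2*(R 0)*(R 2) + 4*b4 + 2*b2*(R 1)) * Polynomial.X^2
          + Polynomial.C (8*(R 0)*(R 1) - 4*b5 + 2*b4*(R 2) + 4*b3*(R 1) + 2*b2*(R 0) + 4*b1*b4)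
            * Polynomial.X
          + Polynomial.C (4*(R 0)^2 + 4*b5*(R 2) + 4*b3*(R 0) + 2*b2*b4)) * Polynomial.X
      + Polynomial.C (Polynomial.C ((R 1)^2) * Polynomial.X^4
          + Polynomial.C (2*(R 0)*(R 1) - 4*b5) * Polynomial.X^3
          + Polynomial.C ((R 0)^2 - 2*b4*(R 1) - 4*b1*b5) * Polynomial.X^2
          + Polynomial.C (-(4*b5*(R 1)) - 2*b4*(R 0) - 4*b2*b5) * Polynomial.X
          + Polynomial.C (b4^2 - 4*b3*b5 - 4*b5*(R 0))), by monicity!, ?_⟩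
    rw [← Polynomial.aeval_def]
    have hcalc : (Polynomial.aeval (Ideal.Quotient.mk I (MvPolynomial.X 1))) (Polynomial.X^4
      + Polynomial.C (Polynomial.C (2*(R 2)) * Polynomial.X
          + Polynomial.C (4*(R 2)^2 + 2*b2 + 4*b1*(R 2))) * Polynomial.X^3
      + Polynomial.C (Polynomial.C ((R 2)^2 - 2*(R 1)) * Polynomial.X^2
          + Polynomial.C (-(8*(R 1)*(R 2)) - 2*(R 0) - 4*b3 - 2*b2*(R 2) - 4*b1*(R 1)) * Polynomial.X
          + Polynomial.C (-(8*(R 0)*(R 2)) + 2*b4 - 4*b3*(R 2) + b2^2 - 4*b1*(R 0) - 4*b1*b3))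
            * Polynomial.X^2
      + Polynomial.C (Polynomial.C (-(2*(R 1)*(R 2))) * Polynomial.X^3
          + Polynomial.C (4*(R 1)^2 - 2*(R 0)*(R 2) + 4*b4 + 2*b2*(R 1)) * Polynomial.X^2
          + Polynomial.C (8*(R 0)*(R 1) - 4*b5 + 2*b4*(R 2) + 4*b3*(R 1) + 2*b2*(R 0) + 4*b1*b4)
            * Polynomial.X
          + Polynomial.C (4*(R 0)^2 + 4*b5*(R 2) + 4*b3*(R 0) + 2*b2*b4)) * Polynomial.X
      + Polynomial.C (Polynomial.C ((R 1)^2) * Polynomial.X^4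
          + Polynomial.C (2*(R 0)*(R 1) - 4*b5) * Polynomial.X^3
          + Polynomial.C ((R 0)^2 - 2*b4*(R 1) - 4*b1*b5) * Polynomial.X^2
          + Polynomial.C (-(4*b5*(R 1)) - 2*b4*(R 0) - 4*b2*b5) * Polynomial.X
          + Polynomial.C (b4^2 - 4*b3*b5 - 4*b5*(R 0))))
        = Ideal.Quotient.mk I QuMv := by
      rw [hQuMv]
      simp only [map_add, map_mul, map_pow, map_sub, map_neg, Polynomial.aeval_X,
        Polynomial.aeval_C, halg, AlgHom.toRingHom_eq_coe, RingHom.coe_coe, hmkC]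
    rw [hcalc, relQu]
  have iW : IsIntegral (Polynomial K) (Ideal.Quotient.mk I (MvPolynomial.X 6)) := by
    apply IsIntegral.of_pow (n := 2) (by norm_num)
    rw [relW]
    exact ((((iS.pow 3).add ((iC b1).mul (iS.pow 2))).add (((iC b2).add (iC (R 1))).mul iS)).add
      ((iC b3).add (iC (R 0)))).add (iU.mul (iS.sub (iC (R 2))))
  have iV : IsIntegral (Polynomial K) (Ideal.Quotient.mk I (MvPolynomial.X 5)) := by
    apply IsIntegral.of_pow (n := 2) (by norm_num)
    rw [relH]
    exact (((iS.add ((iC b1).add (iC (R 2)))).mul (iU.pow 2)).sub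
      (((iC (R 0)).add ((iC (R 1)).mul iS)).mul iU)).add (iC b5)
  have iZ0 : IsIntegral (Polynomial K) (Ideal.Quotient.mk I (MvPolynomial.X 0)) := by
    rw [relq]
    exact ((iC (R 0)).add ((iC (R 1)).mul iS)).sub ((iC (R 2)).mul iU)
  have iZ7 : IsIntegral (Polynomial K) (Ideal.Quotient.mk I (MvPolynomial.X 7)) := by
    have h21 : algebraMap K (MvPolynomial (Fin 8) K ⧸ I) 2 * algebraMap K _ 2⁻¹ = 1 := by
      rw [← map_mul, mul_inv_cancel₀ hK2, map_one]
    have h2A : (2 : MvPolynomial (Fin 8) K ⧸ I) = algebraMap K _ 2 := by rw [map_ofNat]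
    have relz7 : Ideal.Quotient.mk I (MvPolynomial.X 7)
        = algebraMap K _ (2⁻¹) * (Ideal.Quotient.mk I (MvPolynomial.X 0) * Ideal.Quotient.mk I (MvPolynomial.X 2)
          - (Ideal.Quotient.mk I (MvPolynomial.X 1))^2 + algebraMap K _ b2 * Ideal.Quotient.mk I (MvPolynomial.X 1)
          - algebraMap K _ b4) := by
      rw [h2A] at rel1
      linear_combination (algebraMap K (MvPolynomial (Fin 8) K ⧸ I) 2⁻¹) * rel1
        - Ideal.Quotient.mk I (MvPolynomial.X 7) * h21
    rw [relz7]
    exact (iC 2⁻¹).mul ((((iZ0.mul iS).sub (iU.pow 2)).add ((iC b2).mul iU)).sub (iC b4))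
  have iX4 : IsIntegral (Polynomial K) (Ideal.Quotient.mk I (MvPolynomial.X 4)) := by
    rw [rel2]
    exact (iW.mul iU).sub (iV.mul iS)
  have iX3 : IsIntegral (Polynomial K) (Ideal.Quotient.mk I (MvPolynomial.X 3)) := by
    rw [rel3]
    exact (((((iW.mul iZ0).neg).sub (iV.mul iU)).add ((i2.mul iX4).mul iS)).add
      ((i2.mul (iC b1)).mul iX4)).sub ((iC b2).mul iV)
  have iX : ∀ n : Fin 8, IsIntegral (Polynomial K) (Ideal.Quotient.mk I (X n)) := by
    intro n
    fin_cases n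
    · exact iZ0
    · exact iU
    · exact iS
    · exact iX3
    · exact iX4
    · exact iV
    · exact iW
    · exact iZ7
  haveI iInt : Algebra.IsIntegral (Polynomial K) (MvPolynomial (Fin 8) K ⧸ I) := by
    constructor
    intro a
    obtain ⟨P, rfl⟩ := Ideal.Quotient.mk_surjective a
    induction P using MvPolynomial.induction_on with
    | C c => rw [hmkC]; exact iC c
    | add f g hf hg => rw [map_add]; exact hf.add hg
    | mul_X f n hf => rw [map_mul]; exact hf.mul (iX n)
  -- points of `Vs` over every value of the `Z22`-coordinate
  have hpoint : ∀ t : K, ∃ x ∈ Vs, x 2 = t := by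
    intro t
    obtain ⟨x, h1, h2, h3, h4, h5, h6, hq, hx2⟩ :=
      GrantAux.grant_exists hK2 b1 b2 b3 b4 b5 (R 0) (R 1) (R 2) t
    refine ⟨x, ⟨?_, hq⟩, hx2⟩
    intro fi hfi
    simp only [grantPolys, List.mem_cons, List.not_mem_nil, or_false] at hfi
    rcases hfi with rfl | rfl | rfl | rfl | rfl | rfl
    · rw [GrantAux.eval_grantF1]; exact h1
    · rw [GrantAux.eval_grantF2]; exact h2
    · rw [GrantAux.eval_grantF3]; exact h3
    · rw [GrantAux.eval_grantF4]; exact h4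
    · rw [GrantAux.eval_grantF5]; exact h5
    · rw [GrantAux.eval_grantF6]; exact h6
  -- the structure map `K[T] → A` is injective
  have hker : RingHom.ker (algebraMap (Polynomial K) (MvPolynomial (Fin 8) K ⧸ I)) = ⊥ := by
    rw [eq_bot_iff]
    intro g hg
    rw [RingHom.mem_ker, halg] at hg
    have hg' : Ideal.Quotient.mk I (Polynomial.aeval (MvPolynomial.X 2 : MvPolynomial (Fin 8) K) g) = 0 := by
      have h := Polynomial.aeval_algHom_apply (Ideal.Quotient.mkₐ K I)
        (MvPolynomial.X 2 : MvPolynomial (Fin 8) K) g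
      simp only [Ideal.Quotient.mkₐ_eq_mk] at h
      rw [← h]
      simpa using hg
    have hmem : Polynomial.aeval (MvPolynomial.X 2 : MvPolynomial (Fin 8) K) g ∈ I :=
      Ideal.Quotient.eq_zero_iff_mem.mp hg'
    have heval : ∀ t : K, g.eval t = 0 := by
      intro t
      obtain ⟨x, hxV, hx2⟩ := hpoint t
      have hv : MvPolynomial.eval x (Polynomial.aeval (MvPolynomial.X 2 : MvPolynomial (Fin 8) K) g) = 0 := by
        rw [hI] at hmem; exact hmem x hxV
      have hconv := Polynomial.aeval_algHom_apply (MvPolynomial.aeval x)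
        (MvPolynomial.X 2 : MvPolynomial (Fin 8) K) g
      rw [MvPolynomial.aeval_X] at hconv
      rw [← MvPolynomial.coe_aeval_eq_eval] at hv
      have : Polynomial.aeval (x 2) g = 0 := by rw [hconv]; exact hv
      rw [← hx2]
      rwa [Polynomial.coe_aeval_eq_eval] at this
    have hg0 : g = 0 := Polynomial.funext (fun t => by rw [heval t, Polynomial.eval_zero])
    simp [hg0]
  -- conclusion: Krull dimension equals 1
  apply le_antisymm
  · -- upper bound
    show Order.krullDim (PrimeSpectrum (MvPolynomial (Fin 8) K ⧸ I)) ≤ _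
    refine iSup_le fun c => ?_
    have hlen : c.length ≤ 1 := by
      by_contra hc
      push_neg at hc
      have step : ∀ P Q : PrimeSpectrum (MvPolynomial (Fin 8) K ⧸ I), P < Q →
          P.asIdeal.comap (algebraMap (Polynomial K) _)
            < Q.asIdeal.comap (algebraMap (Polynomial K) _) := by
        intro P Q hPQ
        haveI := P.2
        haveI := Q.2
        have hlt : P.asIdeal < Q.asIdeal := (PrimeSpectrum.asIdeal_lt_asIdeal _ _).mpr hPQ
        obtain ⟨y, hyQ, hyP⟩ := SetLike.exists_of_lt hlt
        exact Ideal.comap_lt_comap_of_integral_mem_sdiff hlt.le ⟨hyQ, hyP⟩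
          (Algebra.IsIntegral.isIntegral y)
      have h01 : c.toFun ⟨0, by omega⟩ < c.toFun ⟨1, by omega⟩ :=
        c.strictMono (by rw [Fin.mk_lt_mk]; omega)
      have h12 : c.toFun ⟨1, by omega⟩ < c.toFun ⟨2, by omega⟩ :=
        c.strictMono (by rw [Fin.mk_lt_mk]; omega)
      have l1 := step _ _ h01
      have l2 := step _ _ h12
      haveI := (c.toFun ⟨1, by omega⟩).2
      haveI := (c.toFun ⟨2, by omega⟩).2
      have hq1bot : (c.toFun ⟨1, by omega⟩).asIdeal.comap
          (algebraMap (Polynomial K) (MvPolynomial (Fin 8) K ⧸ I)) ≠ ⊥ := ne_bot_of_gt l1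
      have hmax := IsPrime.to_maximal_ideal hq1bot
      have heq := hmax.eq_of_le (Ideal.IsPrime.ne_top inferInstance) l2.le
      exact absurd heq (ne_of_lt l2)
    exact_mod_cast hlen
  · -- lower bound
    haveI : (⊥ : Ideal (Polynomial K)).IsPrime := Ideal.bot_prime
    obtain ⟨Q, _, hQp, hQc⟩ := Ideal.exists_ideal_over_prime_of_isIntegral
      (⊥ : Ideal (Polynomial K)) (⊥ : Ideal (MvPolynomial (Fin 8) K ⧸ I))
      (by rw [← RingHom.ker_eq_comap_bot, hker])
    haveI : (Ideal.span {Polynomial.X} : Ideal (Polynomial K)).IsPrime :=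
      (Ideal.span_singleton_prime Polynomial.X_ne_zero).mpr Polynomial.prime_X
    haveI := hQp
    obtain ⟨M, hQM, hMp, hMc⟩ := Ideal.exists_ideal_over_prime_of_isIntegral
      (Ideal.span {Polynomial.X}) Q (by rw [hQc]; exact bot_le)
    have hne : Q ≠ M := by
      rintro rfl
      rw [hQc] at hMc
      exact Polynomial.X_ne_zero (Ideal.span_singleton_eq_bot.mp hMc.symm)
    have hQM' : (⟨Q, hQp⟩ : PrimeSpectrum (MvPolynomial (Fin 8) K ⧸ I)) < ⟨M, hMp⟩ := by
      rw [← PrimeSpectrum.asIdeal_lt_asIdeal]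
      exact lt_of_le_of_ne hQM hne
    have hser := Order.LTSeries.length_le_krullDim
      ((RelSeries.singleton {(a, b) : PrimeSpectrum (MvPolynomial (Fin 8) K ⧸ I) × PrimeSpectrum (MvPolynomial (Fin 8) K ⧸ I) | a < b} (⟨Q, hQp⟩ : PrimeSpectrum (MvPolynomial (Fin 8) K ⧸ I))).snoc
        ⟨M, hMp⟩ (by simpa using hQM'))
    simpa [ringKrullDim] using hser
end

section
/- Let G be a finite additive abelian group whose 2-torsion subgroup satisfies #{x ∈ G : 2·x = 0} ≤ 16. Let Θ be a subset of G, let L ≥ 1 be an integer, and let D_0, D_1, …, D_L ∈ G. If #G > (L+1)·#Θ + 16·L, then there exists R ∈ G such that D_i + R ∉ Θ for all 0 ≤ i ≤ L, and D_L + R ≠ −(D_j + R) for all 0 ≤ j ≤ L−1. -/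
/-- Let `G` be a finite additive abelian group whose 2-torsion has at
most 16 elements, let `Θ ⊆ G`, let `L ≥ 1` and `D_0, …, D_L ∈ G`. If
`#G > (L+1)·#Θ + 16·L`, then there is an `R ∈ G` with `D_i + R ∉ Θ` for all `i ≤ L`
and `D_L + R ≠ −(D_j + R)` for all `j < L`. -/
theorem stmt_9 {G : Type*} [AddCommGroup G] [Fintype G]
    (h2 : {x : G | 2 • x = 0}.ncard ≤ 16)
    (Θ : Set G) (L : ℕ) (hL : 1 ≤ L) (D : ℕ → G)
    (hcard : (L + 1) * Θ.ncard + 16 * L < Fintype.card G) :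
    ∃ R : G, (∀ i ≤ L, D i + R ∉ Θ) ∧ (∀ j < L, D L + R ≠ -(D j + R)) := by
  classical
  set B1 : Finset G := (Finset.range (L + 1)).biUnion
    (fun i => Finset.univ.filter (fun R => D i + R ∈ Θ)) with hB1
  set B2 : Finset G := (Finset.range L).biUnion
    (fun j => Finset.univ.filter (fun R => D L + R = -(D j + R))) with hB2
  have hΘfin : Θ.Finite := Set.toFinite _
  have hcard1 : B1.card ≤ (L + 1) * Θ.ncard := by
    calc B1.card ≤ ∑ i ∈ Finset.range (L + 1),
        (Finset.univ.filter (fun R => D i + R ∈ Θ)).card := Finset.card_biUnion_le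
    _ ≤ ∑ i ∈ Finset.range (L + 1), Θ.ncard := by
        apply Finset.sum_le_sum
        intro i _
        have heq : Finset.univ.filter (fun R : G => D i + R ∈ Θ)
            = hΘfin.toFinset.image (fun t => -(D i) + t) := by
          ext R
          simp only [Finset.mem_filter, Finset.mem_univ, true_and, Finset.mem_image,
            Set.Finite.mem_toFinset]
          constructor
          · intro h; exact ⟨D i + R, h, by abel⟩
          · rintro ⟨t, ht, rfl⟩; simpa using ht
        rw [heq, Finset.card_image_of_injective _ (add_right_injective _),
          Set.ncard_eq_toFinset_card _ hΘfin]
    _ = (L + 1) * Θ.ncard := by simp [Finset.sum_const, Finset.card_range, mul_comm]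
  have h2fin : {x : G | 2 • x = 0}.Finite := Set.toFinite _
  have hcard2 : B2.card ≤ 16 * L := by
    calc B2.card ≤ ∑ j ∈ Finset.range L,
        (Finset.univ.filter (fun R => D L + R = -(D j + R))).card := Finset.card_biUnion_le
    _ ≤ ∑ j ∈ Finset.range L, 16 := by
        apply Finset.sum_le_sum
        intro j _
        set S := Finset.univ.filter (fun R : G => D L + R = -(D j + R)) with hS
        rcases S.eq_empty_or_nonempty with he | ⟨R0, hR0⟩
        · simp [he]
        · have hR0' : D L + R0 = -(D j + R0) := by
            simpa [hS] using hR0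
          have hsub : S ⊆ h2fin.toFinset.image (fun t => R0 + t) := by
            intro R hR
            have hR' : D L + R = -(D j + R) := by simpa [hS] using hR
            refine Finset.mem_image.2 ⟨R - R0, ?_, by abel⟩
            rw [Set.Finite.mem_toFinset]
            have h1 : R + R = -(D j) + -(D L) := by
              rw [neg_add, eq_add_neg_iff_add_eq] at hR'
              rw [← hR']; abel
            have h2' : R0 + R0 = -(D j) + -(D L) := by
              rw [neg_add, eq_add_neg_iff_add_eq] at hR0'
              rw [← hR0']; abel
            show 2 • (R - R0) = 0
            rw [two_smul]
            have hsplit : R - R0 + (R - R0) = (R + R) - (R0 + R0) := by abel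
            rw [hsplit, h1, h2', sub_self]
          calc S.card ≤ (h2fin.toFinset.image (fun t => R0 + t)).card :=
              Finset.card_le_card hsub
          _ ≤ h2fin.toFinset.card := Finset.card_image_le
          _ ≤ 16 := by rwa [← Set.ncard_eq_toFinset_card _ h2fin]
    _ = 16 * L := by simp [mul_comm]
  have hlt : (B1 ∪ B2).card < Fintype.card G := by
    calc (B1 ∪ B2).card ≤ B1.card + B2.card := Finset.card_union_le _ _
    _ ≤ (L + 1) * Θ.ncard + 16 * L := Nat.add_le_add hcard1 hcard2
    _ < Fintype.card G := hcard
  have hex : ∃ R : G, R ∉ B1 ∪ B2 := by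
    by_contra hc
    push_neg at hc
    have : (Finset.univ : Finset G) ⊆ B1 ∪ B2 := fun x _ => hc x
    have := Finset.card_le_card this
    simp only [Finset.card_univ] at this
    omega
  obtain ⟨R, hR⟩ := hex
  refine ⟨R, ?_, ?_⟩
  · intro i hi hmem
    exact hR (Finset.mem_union_left _ (Finset.mem_biUnion.2
      ⟨i, Finset.mem_range.2 (Nat.lt_succ_of_le hi), by simp [hmem]⟩))
  · intro j hj heq
    exact hR (Finset.mem_union_right _ (Finset.mem_biUnion.2
      ⟨j, Finset.mem_range.2 hj, by simp [heq]⟩))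
end
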